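/- Let M and N be ω-saturated Θ-models and suppose every Θ-formula that is a standard translation of an intuitionistic formula true at (M, a, b̄ₙ) is also true at (N, c, d̄ₙ). Then the relation A defined by (a'; b̄'_l) A (c'; d̄'_l) iff every Θ-formula that is a standard translation of an intuitionistic formula true at (α, a', b̄'_l) is true at (β, c', d̄'_l) (for α, β ∈ {M, N}) is an ⟨(M,a,b̄ₙ),(N,c,d̄ₙ)⟩-asimulation. -/

import Mathlib

namespace IPC

/-- The classical vocabulary Σ: binary R, binary E, and for each intuitionistic
`n`-ary predicate letter indexed by `m` a classical `(n+1)`-ary letter `P n m`. -/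
inductive Sym : Type
  | R : Sym
  | E : Sym
  | P : ℕ → ℕ → Sym
  deriving DecidableEq

def Sym.arity : Sym → ℕ
  | .R => 2
  | .E => 2
  | .P n _ => n + 1

theorem Sym.arity_pos (s : Sym) : 0 < s.arity := by
  cases s <;> simp [Sym.arity]

/-- A first-order model for the vocabulary Σ. -/
structure Model : Type 1 where
  D : Type
  ne : Nonempty D
  rel : ∀ s : Sym, (Fin s.arity → D) → Prop

/-- First-order formulas (with identity) over Σ; variables are natural numbers. -/
inductive Fml : Type
  | atom (s : Sym) (args : Fin s.arity → ℕ)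
  | eq (v w : ℕ)
  | fls
  | neg (φ : Fml)
  | conj (φ ψ : Fml)
  | disj (φ ψ : Fml)
  | impl (φ ψ : Fml)
  | all (v : ℕ) (φ : Fml)
  | ex (v : ℕ) (φ : Fml)

/-- Tarskian satisfaction relative to a variable assignment. -/
def Fml.eval (M : Model) : Fml → (ℕ → M.D) → Prop
  | .atom s args, f => M.rel s (fun i => f (args i))
  | .eq v w, f => f v = f w
  | .fls, _ => False
  | .neg φ, f => ¬ φ.eval M f
  | .conj φ ψ, f => φ.eval M f ∧ ψ.eval M f
  | .disj φ ψ, f => φ.eval M f ∨ ψ.eval M f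
  | .impl φ ψ, f => φ.eval M f → ψ.eval M f
  | .all v φ, f => ∀ d : M.D, φ.eval M (Function.update f v d)
  | .ex v φ, f => ∃ d : M.D, φ.eval M (Function.update f v d)

/-- Degree: maximal nesting of quantifiers. -/
def Fml.deg : Fml → ℕ
  | .atom _ _ => 0
  | .eq _ _ => 0
  | .fls => 0
  | .neg φ => φ.deg
  | .conj φ ψ => max φ.deg ψ.deg
  | .disj φ ψ => max φ.deg ψ.deg
  | .impl φ ψ => max φ.deg ψ.deg
  | .all _ φ => φ.deg + 1
  | .ex _ φ => φ.deg + 1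

/-- Free variables. -/
def Fml.free : Fml → Finset ℕ
  | .atom _ args => Finset.univ.image args
  | .eq v w => {v, w}
  | .fls => ∅
  | .neg φ => φ.free
  | .conj φ ψ => φ.free ∪ ψ.free
  | .disj φ ψ => φ.free ∪ ψ.free
  | .impl φ ψ => φ.free ∪ ψ.free
  | .all v φ => φ.free.erase v
  | .ex v φ => φ.free.erase v

/-- All variables occurring (free or bound). -/
def Fml.vars : Fml → Finset ℕ
  | .atom _ args => Finset.univ.image args
  | .eq v w => {v, w}
  | .fls => ∅
  | .neg φ => φ.vars
  | .conj φ ψ => φ.vars ∪ ψ.vars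
  | .disj φ ψ => φ.vars ∪ ψ.vars
  | .impl φ ψ => φ.vars ∪ ψ.vars
  | .all v φ => insert v φ.vars
  | .ex v φ => insert v φ.vars

/-- Predicate symbols occurring in a formula. -/
def Fml.syms : Fml → Finset Sym
  | .atom s _ => {s}
  | .eq _ _ => ∅
  | .fls => ∅
  | .neg φ => φ.syms
  | .conj φ ψ => φ.syms ∪ ψ.syms
  | .disj φ ψ => φ.syms ∪ ψ.syms
  | .impl φ ψ => φ.syms ∪ ψ.syms
  | .all _ φ => φ.syms
  | .ex _ φ => φ.syms

/-- Σ_φ : the symbols of φ together with R and E. -/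
def sigOf (φ : Fml) : Finset Sym := φ.syms ∪ {Sym.R, Sym.E}

/-- Logical equivalence. -/
def FmlEquiv (φ ψ : Fml) : Prop :=
  ∀ (M : Model) (f : ℕ → M.D), φ.eval M f ↔ ψ.eval M f

/-- Logical consequence between single formulas. -/
def EntailsF (φ ψ : Fml) : Prop :=
  ∀ (M : Model) (f : ℕ → M.D), φ.eval M f → ψ.eval M f

/-- Logical consequence from a set of formulas. -/
def EntailsSet (Γ : Set Fml) (φ : Fml) : Prop :=
  ∀ (M : Model) (f : ℕ → M.D), (∀ ψ ∈ Γ, ψ.eval M f) → φ.eval M f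

def Satisfiable (φ : Fml) : Prop := ∃ (M : Model) (f : ℕ → M.D), φ.eval M f

/-- Intuitionistic predicate formulas (without identity); an `n`-ary letter
indexed by `m` takes `n` object variables. -/
inductive IFml : Type
  | atom (n m : ℕ) (args : Fin n → ℕ)
  | fls
  | conj (i j : IFml)
  | disj (i j : IFml)
  | impl (i j : IFml)
  | all (v : ℕ) (i : IFml)
  | ex (v : ℕ) (i : IFml)

/-- Standard x-translation.  Object variables `v` of intuitionistic formulas are
represented as the even classical variables `2*v`; world variables are odd, and
a fresh world variable for a binder under world variable `x` is `x+2`. -/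
def ST : IFml → ℕ → Fml
  | .atom n m args, x => .atom (.P n m) (Fin.cons x (fun i => 2 * args i))
  | .fls, x => .neg (.eq x x)
  | .conj i j, x => .conj (ST i x) (ST j x)
  | .disj i j, x => .disj (ST i x) (ST j x)
  | .impl i j, x =>
      .all (x + 2) (.impl (.atom .R ![x, x + 2]) (.impl (ST i (x + 2)) (ST j (x + 2))))
  | .ex w i, x => .ex (2 * w) (.conj (.atom .E ![x, 2 * w]) (ST i x))
  | .all w i, x =>
      .all (x + 2) (.all (2 * w)
        (.impl (.conj (.atom .R ![x, x + 2]) (.atom .E ![x + 2, 2 * w])) (ST i (x + 2))))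

/-- `ψ` is a standard x-translation (with x the fixed variable 1). -/
def IsSTF (ψ : Fml) : Prop := ∃ i : IFml, ψ = ST i 1

/-- Truth of `φ(x, w̄ₙ)` at the n-ary evaluation point `(M, a, b̄ₙ)`:
true under every assignment sending `x` (variable 1) to `a` and `wᵢ`
(variable `2*i`) to `bᵢ`. -/
def Sat (M : Model) (a : M.D) (bs : List M.D) (φ : Fml) : Prop :=
  ∀ f : ℕ → M.D, f 1 = a → (∀ i : Fin bs.length, f (2 * i.val) = bs.get i) → φ.eval M f

/-- Free variables of φ are among x, w₁, …, wₙ. -/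
def FreeOK (n : ℕ) (φ : Fml) : Prop :=
  ∀ v ∈ φ.free, v = 1 ∨ ∃ i < n, v = 2 * i

def relR (α : Model) (a b : α.D) : Prop := α.rel .R ![a, b]
def relE (α : Model) (a b : α.D) : Prop := α.rel .E ![a, b]

/-- Truth of the atom `P(x, w̄_l)` at `(α, a, ō_l)`. -/
def atomSat (α : Model) (P : Sym) (a : α.D) (os : List α.D) : Prop :=
  ∃ h : P.arity = os.length + 1, α.rel P (fun i => (a :: os).get (Fin.cast h i))

/-- The model named by a side: `true ↦ M`, `false ↦ N`. -/
def side (M N : Model) : Bool → Model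
  | true => M
  | false => N

/-- `⟨(M,a,b̄ₙ),(N,c,d̄ₙ)⟩_k`-asimulation conditions (without the condition on the
distinguished points).  The relation `A` relates tuples `(w̄_m, a'; ō_l)` over one
of the two models to similar tuples over one of the two models. -/
structure IsKAsim (Θ : Set Sym) (M N : Model) (n k : ℕ)
    (A : ∀ s t : Bool, List (side M N s).D → (side M N s).D → List (side M N s).D →
          List (side M N t).D → (side M N t).D → List (side M N t).D → Prop) : Prop where
  lengths : ∀ s t ws a' os ws' c' os', A s t ws a' os ws' c' os' →
      ws.length = ws'.length ∧ os.length = os'.length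
  atoms : ∀ s t ws a' os ws' c' os', A s t ws a' os ws' c' os' →
      ∀ P ∈ Θ, P ≠ Sym.R → P ≠ Sym.E →
        atomSat (side M N s) P a' os → atomSat (side M N t) P c' os'
  back : ∀ s t ws a' os ws' c' os', A s t ws a' os ws' c' os' →
      ws.length + os.length < n + k →
      ∀ c'', relR (side M N t) c' c'' →
        ∃ a'', relR (side M N s) a' a'' ∧
          A t s (ws' ++ [c']) c'' os' (ws ++ [a']) a'' os ∧
          A s t (ws ++ [a']) a'' os (ws' ++ [c']) c'' os'
  exi : ∀ s t ws a' os ws' c' os', A s t ws a' os ws' c' os' →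
      ws.length + os.length < n + k →
      ∀ b'', relE (side M N s) a' b'' →
        ∃ d'', relE (side M N t) c' d'' ∧
          A s t ws a' (os ++ [b'']) ws' c' (os' ++ [d''])
  uni : ∀ s t ws a' os ws' c' os', A s t ws a' os ws' c' os' →
      ws.length + os.length + 1 < n + k →
      ∀ c'' d'', relR (side M N t) c' c'' → relE (side M N t) c'' d'' →
        ∃ a'' b'', relR (side M N s) a' a'' ∧ relE (side M N s) a'' b'' ∧
          A s t (ws ++ [a']) a'' (os ++ [b'']) (ws' ++ [c']) c'' (os' ++ [d''])

/-- (Unparametrized) asimulation conditions. -/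
structure IsAsim (Θ : Set Sym) (M N : Model)
    (A : ∀ s t : Bool, (side M N s).D → List (side M N s).D →
          (side M N t).D → List (side M N t).D → Prop) : Prop where
  lengths : ∀ s t a' os c' os', A s t a' os c' os' → os.length = os'.length
  atoms : ∀ s t a' os c' os', A s t a' os c' os' →
      ∀ P ∈ Θ, P ≠ Sym.R → P ≠ Sym.E →
        atomSat (side M N s) P a' os → atomSat (side M N t) P c' os'
  back : ∀ s t a' os c' os', A s t a' os c' os' →
      ∀ c'', relR (side M N t) c' c'' →
        ∃ a'', relR (side M N s) a' a'' ∧ A t s c'' os' a'' os ∧ A s t a'' os c'' os'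
  exi : ∀ s t a' os c' os', A s t a' os c' os' →
      ∀ b'', relE (side M N s) a' b'' →
        ∃ d'', relE (side M N t) c' d'' ∧ A s t a' (os ++ [b'']) c' (os' ++ [d''])
  uni : ∀ s t a' os c' os', A s t a' os c' os' →
      ∀ c'' d'', relR (side M N t) c' c'' → relE (side M N t) c'' d'' →
        ∃ a'' b'', relR (side M N s) a' a'' ∧ relE (side M N s) a'' b'' ∧
          A s t a'' (os ++ [b'']) c'' (os' ++ [d''])

/-- Invariance with respect to k-asimulations (for formulas `φ(x, w̄ₙ)`). -/
def KInvariant (φ : Fml) (n k : ℕ) : Prop :=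
  ∀ (Θ : Set Sym), ↑(sigOf φ) ⊆ Θ →
    ∀ (M N : Model) (a : M.D) (bs : List M.D) (c : N.D) (ds : List N.D),
      bs.length = n → ds.length = n →
      (∃ A, IsKAsim Θ M N n k A ∧ A true false [] a bs [] c ds) →
      Sat M a bs φ → Sat N c ds φ

/-- Invariance with respect to asimulations. -/
def AsimInvariant (φ : Fml) (n : ℕ) : Prop :=
  ∀ (Θ : Set Sym), ↑(sigOf φ) ⊆ Θ →
    ∀ (M N : Model) (a : M.D) (bs : List M.D) (c : N.D) (ds : List N.D),
      bs.length = n → ds.length = n →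
      (∃ A, IsAsim Θ M N A ∧ A true false a bs c ds) →
      Sat M a bs φ → Sat N c ds φ

def conjList : List Fml → Fml
  | [] => .neg .fls
  | φ :: l => .conj φ (conjList l)

def disjList : List Fml → Fml
  | [] => .fls
  | φ :: l => .disj φ (disjList l)

/-- A `(Σ_φ, (x, w̄ₙ), k)`-formula that is a standard x-translation. -/
def GoodFml (φ : Fml) (n k : ℕ) (ψ : Fml) : Prop :=
  ψ.syms ⊆ sigOf φ ∧ FreeOK n ψ ∧ ψ.deg ≤ k ∧ IsSTF ψ

/-- A complete `(φ, (x, w̄ₙ), k)`-conjunction, given by its list of conjuncts. -/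
def CompleteConj (φ : Fml) (n k : ℕ) (L : List Fml) : Prop :=
  (∀ ψ ∈ L, GoodFml φ n k ψ) ∧
  ∃ (M : Model) (a : M.D) (bs : List M.D), bs.length = n ∧
    Sat M a bs (conjList L) ∧ Sat M a bs φ ∧
    ∀ ψ : Fml, GoodFml φ n k ψ → Sat M a bs ψ → EntailsF (conjList L) ψ

/-- All Θ-formulas that are standard x-translations of intuitionistic formulas
true at `(α, a, ōₗ)` are true at `(β, c, d̄ₗ)`. -/
def ITLe (Θ : Set Sym) (α : Model) (a : α.D) (os : List α.D)
    (β : Model) (c : β.D) (ds : List β.D) : Prop :=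
  ∀ i : IFml, ↑(ST i 1).syms ⊆ Θ → FreeOK os.length (ST i 1) →
    Sat α a os (ST i 1) → Sat β c ds (ST i 1)

/-- ω-saturation: every type over finitely many parameters (the values of the
assignment `f` on the finite set `W`) in finitely many variables (`V`) that is
finitely satisfiable in `M` is realized in `M`. -/
def OmegaSaturated (M : Model) : Prop :=
  ∀ (f : ℕ → M.D) (V W : Finset ℕ) (Γ : Set Fml),
    (∀ ψ ∈ Γ, ↑ψ.free ⊆ (↑(V ∪ W) : Set ℕ)) →
    (∀ Γ' : Finset Fml, ↑Γ' ⊆ Γ →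
      ∃ g : ℕ → M.D, (∀ v ∉ V, g v = f v) ∧ ∀ ψ ∈ Γ', ψ.eval M g) →
    ∃ g : ℕ → M.D, (∀ v ∉ V, g v = f v) ∧ ∀ ψ ∈ Γ, ψ.eval M g

/-- The intuitionistic consequences of φ: Σ_φ-formulas in the variables
x, w̄ₙ that are standard x-translations and follow from φ. -/
def IC (φ : Fml) (n : ℕ) : Set Fml :=
  {ψ | ψ.syms ⊆ sigOf φ ∧ FreeOK n ψ ∧ IsSTF ψ ∧ EntailsF φ ψ}

/-! K-relative notions. -/

def KSatisfiable (K : Set Model) (Γ : Set Fml) : Prop :=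
  ∃ M ∈ K, ∃ f : ℕ → M.D, ∀ ψ ∈ Γ, ψ.eval M f

def KEntails (K : Set Model) (φ ψ : Fml) : Prop := ¬ KSatisfiable K {φ, ψ.neg}

def KEquiv (K : Set Model) (φ ψ : Fml) : Prop := KEntails K φ ψ ∧ KEntails K ψ φ

def KAsimInvariant (K : Set Model) (φ : Fml) (n : ℕ) : Prop :=
  ∀ (Θ : Set Sym), ↑(sigOf φ) ⊆ Θ →
    ∀ (M N : Model), M ∈ K → N ∈ K →
      ∀ (a : M.D) (bs : List M.D) (c : N.D) (ds : List N.D),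
        bs.length = n → ds.length = n →
        (∃ A, IsAsim Θ M N A ∧ A true false a bs c ds) →
        Sat M a bs φ → Sat N c ds φ

end IPC

namespace IPC

/-! ### Auxiliary lemmas -/

theorem eval_congr (M : Model) (φ : Fml) : ∀ (f g : ℕ → M.D),
    (∀ v ∈ φ.free, f v = g v) → (φ.eval M f ↔ φ.eval M g) := by
  induction φ with
  | atom s args =>
      intro f g h
      have : (fun i => f (args i)) = (fun i => g (args i)) := by
        funext i; exact h _ (by simp [Fml.free])
      simp only [Fml.eval, this]
  | eq v w =>
      intro f g h
      have h1 := h v (by simp [Fml.free]); have h2 := h w (by simp [Fml.free])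
      simp only [Fml.eval, h1, h2]
  | fls => intro f g h; simp [Fml.eval]
  | neg φ ih => intro f g h; simp only [Fml.eval]; rw [ih f g h]
  | conj φ ψ ih1 ih2 =>
      intro f g h
      simp only [Fml.eval]
      rw [ih1 f g (fun v hv => h v (by simp [Fml.free, hv])),
          ih2 f g (fun v hv => h v (by simp [Fml.free, hv]))]
  | disj φ ψ ih1 ih2 =>
      intro f g h
      simp only [Fml.eval]
      rw [ih1 f g (fun v hv => h v (by simp [Fml.free, hv])),
          ih2 f g (fun v hv => h v (by simp [Fml.free, hv]))]
  | impl φ ψ ih1 ih2 =>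
      intro f g h
      simp only [Fml.eval]
      rw [ih1 f g (fun v hv => h v (by simp [Fml.free, hv])),
          ih2 f g (fun v hv => h v (by simp [Fml.free, hv]))]
  | all v φ ih =>
      intro f g h
      simp only [Fml.eval]
      apply forall_congr'; intro d
      apply ih
      intro w hw
      by_cases hwv : w = v
      · subst hwv; simp
      · rw [Function.update_of_ne hwv, Function.update_of_ne hwv]
        exact h w (by simp [Fml.free, Finset.mem_erase, hwv, hw])
  | ex v φ ih =>
      intro f g h
      simp only [Fml.eval]
      apply exists_congr; intro d
      apply ih
      intro w hw
      by_cases hwv : w = v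
      · subst hwv; simp
      · rw [Function.update_of_ne hwv, Function.update_of_ne hwv]
        exact h w (by simp [Fml.free, Finset.mem_erase, hwv, hw])

theorem freeR (u v : ℕ) : (Fml.atom .R ![u, v]).free = {u, v} := by
  show Finset.univ.image (![u, v] : Fin 2 → ℕ) = {u, v}
  ext w; simp [Fin.exists_fin_two]; omega

theorem freeE (u v : ℕ) : (Fml.atom .E ![u, v]).free = {u, v} := by
  show Finset.univ.image (![u, v] : Fin 2 → ℕ) = {u, v}
  ext w; simp [Fin.exists_fin_two]; omega

theorem evalR (α : Model) (f : ℕ → α.D) (u v : ℕ) :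
    (Fml.atom .R ![u, v]).eval α f ↔ relR α (f u) (f v) := by
  unfold relR
  have h : (fun i : Fin 2 => f (![u, v] i)) = ![f u, f v] := by
    funext i; fin_cases i <;> simp
  exact iff_of_eq (congrArg (α.rel .R) h)

theorem evalE (α : Model) (f : ℕ → α.D) (u v : ℕ) :
    (Fml.atom .E ![u, v]).eval α f ↔ relE α (f u) (f v) := by
  unfold relE
  have h : (fun i : Fin 2 => f (![u, v] i)) = ![f u, f v] := by
    funext i; fin_cases i <;> simp
  exact iff_of_eq (congrArg (α.rel .E) h)

theorem image_cons (k : ℕ) (x : ℕ) (g : Fin k → ℕ) :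
    Finset.univ.image (Fin.cons x g : Fin (k + 1) → ℕ) = insert x (Finset.univ.image g) := by
  rw [Fin.univ_succ]
  simp only [Finset.cons_eq_insert, Finset.image_insert, Fin.cons_zero]
  congr 1
  ext v
  simp only [Finset.mem_image, Finset.mem_map, Finset.mem_univ, true_and,
    Function.Embedding.coeFn_mk, exists_exists_eq_and]
  constructor
  · rintro ⟨a, hav⟩
    exact ⟨a, by simpa using hav⟩
  · rintro ⟨a, ha⟩
    exact ⟨a, by simpa using ha⟩

/-- Even (object) free variables of an intuitionistic formula. -/
def objFree : IFml → Finset ℕ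
  | .atom _ _ args => Finset.univ.image (fun i => 2 * args i)
  | .fls => ∅
  | .conj i j => objFree i ∪ objFree j
  | .disj i j => objFree i ∪ objFree j
  | .impl i j => objFree i ∪ objFree j
  | .all w i => (objFree i).erase (2 * w)
  | .ex w i => (objFree i).erase (2 * w)

theorem objFree_even (i : IFml) : ∀ v ∈ objFree i, v % 2 = 0 := by
  induction i with
  | atom n m args =>
      intro v hv
      simp only [objFree, Finset.mem_image] at hv
      obtain ⟨j, _, rfl⟩ := hv; omega
  | fls => intro v hv; simp [objFree] at hv
  | conj i j ih1 ih2 =>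
      intro v hv
      rcases Finset.mem_union.mp hv with hv | hv; exacts [ih1 v hv, ih2 v hv]
  | disj i j ih1 ih2 =>
      intro v hv
      rcases Finset.mem_union.mp hv with hv | hv; exacts [ih1 v hv, ih2 v hv]
  | impl i j ih1 ih2 =>
      intro v hv
      rcases Finset.mem_union.mp hv with hv | hv; exacts [ih1 v hv, ih2 v hv]
  | all w i ih =>
      intro v hv; exact ih v (Finset.mem_of_mem_erase hv)
  | ex w i ih =>
      intro v hv; exact ih v (Finset.mem_of_mem_erase hv)

theorem ST_free (i : IFml) : ∀ x : ℕ, x % 2 = 1 → (ST i x).free = insert x (objFree i) := by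
  induction i with
  | atom n m args =>
      intro x hx
      show Finset.univ.image (Fin.cons x (fun i => 2 * args i) : Fin (n + 1) → ℕ) = _
      rw [image_cons]; rfl
  | fls =>
      intro x hx
      show ({x, x} : Finset ℕ) = insert x (∅ : Finset ℕ)
      simp
  | conj i j ih1 ih2 =>
      intro x hx
      show (ST i x).free ∪ (ST j x).free = insert x (objFree i ∪ objFree j)
      rw [ih1 x hx, ih2 x hx]
      ext v
      simp only [Finset.mem_union, Finset.mem_insert]
      tauto
  | disj i j ih1 ih2 =>
      intro x hx
      show (ST i x).free ∪ (ST j x).free = insert x (objFree i ∪ objFree j)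
      rw [ih1 x hx, ih2 x hx]
      ext v
      simp only [Finset.mem_union, Finset.mem_insert]
      tauto
  | impl i j ih1 ih2 =>
      intro x hx
      show (((Fml.atom .R ![x, x + 2]).free ∪ ((ST i (x + 2)).free ∪ (ST j (x + 2)).free)).erase
          (x + 2)) = insert x (objFree i ∪ objFree j)
      rw [freeR, ih1 (x + 2) (by omega), ih2 (x + 2) (by omega)]
      ext v
      simp only [Finset.mem_erase, Finset.mem_union, Finset.mem_insert, Finset.mem_singleton]
      have h1 : v ∈ objFree i → v ≠ x + 2 := fun h => by have := objFree_even i v h; omega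
      have h2 : v ∈ objFree j → v ≠ x + 2 := fun h => by have := objFree_even j v h; omega
      constructor
      · rintro ⟨hne, (h | h) | (h | h) | (h | h)⟩ <;> tauto
      · rintro (rfl | h | h)
        · exact ⟨by omega, Or.inl (Or.inl rfl)⟩
        · exact ⟨h1 h, Or.inr (Or.inl (Or.inr h))⟩
        · exact ⟨h2 h, Or.inr (Or.inr (Or.inr h))⟩
  | all w i ih =>
      intro x hx
      show ((((Fml.atom .R ![x, x + 2]).free ∪ (Fml.atom .E ![x + 2, 2 * w]).free) ∪
          (ST i (x + 2)).free).erase (2 * w)).erase (x + 2) =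
          insert x ((objFree i).erase (2 * w))
      rw [freeR, freeE, ih (x + 2) (by omega)]
      ext v
      simp only [Finset.mem_erase, Finset.mem_union, Finset.mem_insert, Finset.mem_singleton]
      have h1 : v ∈ objFree i → v ≠ x + 2 := fun h => by have := objFree_even i v h; omega
      constructor
      · rintro ⟨hne1, hne2, ((h | h) | (h | h)) | (h | h)⟩ <;> tauto
      · rintro (rfl | ⟨hne, h⟩)
        · exact ⟨by omega, by omega, Or.inl (Or.inl (Or.inl rfl))⟩
        · exact ⟨h1 h, hne, Or.inr (Or.inr h)⟩
  | ex w i ih =>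
      intro x hx
      show (((Fml.atom .E ![x, 2 * w]).free ∪ (ST i x).free).erase (2 * w)) =
          insert x ((objFree i).erase (2 * w))
      rw [freeE, ih x hx]
      ext v
      simp only [Finset.mem_erase, Finset.mem_union, Finset.mem_insert, Finset.mem_singleton]
      constructor
      · rintro ⟨hne, (h | h) | (h | h)⟩ <;> tauto
      · rintro (rfl | ⟨hne, h⟩)
        · exact ⟨by omega, Or.inl (Or.inl rfl)⟩
        · exact ⟨hne, Or.inr (Or.inr h)⟩

theorem ST_syms (i : IFml) : ∀ x : ℕ, (ST i x).syms = (ST i 1).syms := by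
  induction i with
  | atom n m args => intro x; rfl
  | fls => intro x; rfl
  | conj i j ih1 ih2 =>
      intro x
      show (ST i x).syms ∪ (ST j x).syms = (ST i 1).syms ∪ (ST j 1).syms
      rw [ih1, ih2]
  | disj i j ih1 ih2 =>
      intro x
      show (ST i x).syms ∪ (ST j x).syms = (ST i 1).syms ∪ (ST j 1).syms
      rw [ih1, ih2]
  | impl i j ih1 ih2 =>
      intro x
      show {Sym.R} ∪ ((ST i (x + 2)).syms ∪ (ST j (x + 2)).syms) =
        {Sym.R} ∪ ((ST i 3).syms ∪ (ST j 3).syms)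
      rw [ih1, ih2, ih1 3, ih2 3]
  | all w i ih =>
      intro x
      show ({Sym.R} ∪ {Sym.E}) ∪ (ST i (x + 2)).syms = ({Sym.R} ∪ {Sym.E}) ∪ (ST i 3).syms
      rw [ih, ih 3]
  | ex w i ih =>
      intro x
      show {Sym.E} ∪ (ST i x).syms = {Sym.E} ∪ (ST i 1).syms
      rw [ih]

theorem ST_eval_congr (α : Model) (i : IFml) : ∀ (x y : ℕ) (f g : ℕ → α.D),
    x % 2 = 1 → y % 2 = 1 → f x = g y → (∀ v, f (2 * v) = g (2 * v)) →
    ((ST i x).eval α f ↔ (ST i y).eval α g) := by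
  induction i with
  | atom n m args =>
      intro x y f g hx hy hxy h
      have hfn : (fun j : Fin (n + 1) => f ((Fin.cons x (fun i => 2 * args i) : Fin (n + 1) → ℕ) j)) =
          (fun j : Fin (n + 1) => g ((Fin.cons y (fun i => 2 * args i) : Fin (n + 1) → ℕ) j)) := by
        funext j
        refine Fin.cases ?_ ?_ j
        · simpa using hxy
        · intro j'; simpa using h (args j')
      exact iff_of_eq (congrArg (α.rel (Sym.P n m)) hfn)
  | fls => intro x y f g hx hy hxy h; simp [ST, Fml.eval]
  | conj i j ih1 ih2 =>
      intro x y f g hx hy hxy h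
      simp only [ST, Fml.eval]
      rw [ih1 x y f g hx hy hxy h, ih2 x y f g hx hy hxy h]
  | disj i j ih1 ih2 =>
      intro x y f g hx hy hxy h
      simp only [ST, Fml.eval]
      rw [ih1 x y f g hx hy hxy h, ih2 x y f g hx hy hxy h]
  | impl i j ih1 ih2 =>
      intro x y f g hx hy hxy h
      show (∀ d, (Fml.atom .R ![x, x + 2]).eval α (Function.update f (x + 2) d) →
          (ST i (x + 2)).eval α (Function.update f (x + 2) d) →
          (ST j (x + 2)).eval α (Function.update f (x + 2) d)) ↔
        (∀ d, (Fml.atom .R ![y, y + 2]).eval α (Function.update g (y + 2) d) →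
          (ST i (y + 2)).eval α (Function.update g (y + 2) d) →
          (ST j (y + 2)).eval α (Function.update g (y + 2) d))
      apply forall_congr'; intro d
      have hfx : Function.update f (x + 2) d x = f x := Function.update_of_ne (by omega) _ _
      have hgy : Function.update g (y + 2) d y = g y := Function.update_of_ne (by omega) _ _
      have heven : ∀ v, Function.update f (x + 2) d (2 * v) = Function.update g (y + 2) d (2 * v) := by
        intro v
        have e1 : 2 * v ≠ x + 2 := by omega
        have e2 : 2 * v ≠ y + 2 := by omega
        rw [Function.update_of_ne e1, Function.update_of_ne e2]; exact h v
      have hR : (Fml.atom .R ![x, x + 2]).eval α (Function.update f (x + 2) d) ↔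
          (Fml.atom .R ![y, y + 2]).eval α (Function.update g (y + 2) d) := by
        rw [evalR, evalR, hfx, hgy, hxy, Function.update_self, Function.update_self]
      have hi := ih1 (x + 2) (y + 2) _ _ (by omega) (by omega)
        (by rw [Function.update_self, Function.update_self]) heven
      have hj := ih2 (x + 2) (y + 2) _ _ (by omega) (by omega)
        (by rw [Function.update_self, Function.update_self]) heven
      rw [hR, hi, hj]
  | all w i ih =>
      intro x y f g hx hy hxy h
      show (∀ d e, ((Fml.atom .R ![x, x + 2]).eval α
              (Function.update (Function.update f (x + 2) d) (2 * w) e) ∧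
            (Fml.atom .E ![x + 2, 2 * w]).eval α
              (Function.update (Function.update f (x + 2) d) (2 * w) e)) →
          (ST i (x + 2)).eval α (Function.update (Function.update f (x + 2) d) (2 * w) e)) ↔
        (∀ d e, ((Fml.atom .R ![y, y + 2]).eval α
              (Function.update (Function.update g (y + 2) d) (2 * w) e) ∧
            (Fml.atom .E ![y + 2, 2 * w]).eval α
              (Function.update (Function.update g (y + 2) d) (2 * w) e)) →
          (ST i (y + 2)).eval α (Function.update (Function.update g (y + 2) d) (2 * w) e))
      apply forall_congr'; intro d
      apply forall_congr'; intro e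
      set f2 := Function.update (Function.update f (x + 2) d) (2 * w) e with hf2
      set g2 := Function.update (Function.update g (y + 2) d) (2 * w) e with hg2
      have ne1 : x ≠ 2 * w := by omega
      have ne2 : y ≠ 2 * w := by omega
      have ne3 : x ≠ x + 2 := by omega
      have ne4 : y ≠ y + 2 := by omega
      have ne5 : x + 2 ≠ 2 * w := by omega
      have ne6 : y + 2 ≠ 2 * w := by omega
      have hf2x : f2 x = f x := by
        rw [hf2, Function.update_of_ne ne1, Function.update_of_ne ne3]
      have hg2y : g2 y = g y := by
        rw [hg2, Function.update_of_ne ne2, Function.update_of_ne ne4]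
      have hf2x2 : f2 (x + 2) = d := by
        rw [hf2, Function.update_of_ne ne5, Function.update_self]
      have hg2y2 : g2 (y + 2) = d := by
        rw [hg2, Function.update_of_ne ne6, Function.update_self]
      have hf2w : f2 (2 * w) = e := by rw [hf2, Function.update_self]
      have hg2w : g2 (2 * w) = e := by rw [hg2, Function.update_self]
      have heven : ∀ v, f2 (2 * v) = g2 (2 * v) := by
        intro v
        by_cases hvw : v = w
        · subst hvw; rw [hf2w, hg2w]
        · have e1 : 2 * v ≠ 2 * w := by omega
          have e2 : 2 * v ≠ x + 2 := by omega
          have e3 : 2 * v ≠ y + 2 := by omega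
          rw [hf2, hg2, Function.update_of_ne e1, Function.update_of_ne e1,
            Function.update_of_ne e2, Function.update_of_ne e3]
          exact h v
      have hR : (Fml.atom .R ![x, x + 2]).eval α f2 ↔ (Fml.atom .R ![y, y + 2]).eval α g2 := by
        rw [evalR, evalR, hf2x, hg2y, hf2x2, hg2y2, hxy]
      have hEat : (Fml.atom .E ![x + 2, 2 * w]).eval α f2 ↔
          (Fml.atom .E ![y + 2, 2 * w]).eval α g2 := by
        rw [evalE, evalE, hf2x2, hg2y2, hf2w, hg2w]
      have hi := ih (x + 2) (y + 2) f2 g2 (by omega) (by omega) (by rw [hf2x2, hg2y2]) heven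
      rw [hR, hEat, hi]
  | ex w i ih =>
      intro x y f g hx hy hxy h
      show (∃ d, (Fml.atom .E ![x, 2 * w]).eval α (Function.update f (2 * w) d) ∧
          (ST i x).eval α (Function.update f (2 * w) d)) ↔
        (∃ d, (Fml.atom .E ![y, 2 * w]).eval α (Function.update g (2 * w) d) ∧
          (ST i y).eval α (Function.update g (2 * w) d))
      apply exists_congr; intro d
      have ne1 : x ≠ 2 * w := by omega
      have ne2 : y ≠ 2 * w := by omega
      have hf1x : Function.update f (2 * w) d x = f x := Function.update_of_ne ne1 _ _
      have hg1y : Function.update g (2 * w) d y = g y := Function.update_of_ne ne2 _ _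
      have heven : ∀ v, Function.update f (2 * w) d (2 * v) = Function.update g (2 * w) d (2 * v) := by
        intro v
        by_cases hvw : v = w
        · subst hvw; rw [Function.update_self, Function.update_self]
        · have e1 : 2 * v ≠ 2 * w := by omega
          rw [Function.update_of_ne e1, Function.update_of_ne e1]
          exact h v
      have hEat : (Fml.atom .E ![x, 2 * w]).eval α (Function.update f (2 * w) d) ↔
          (Fml.atom .E ![y, 2 * w]).eval α (Function.update g (2 * w) d) := by
        rw [evalE, evalE, hf1x, hg1y, hxy, Function.update_self, Function.update_self]
      have hi := ih x y _ _ hx hy (by rw [hf1x, hg1y, hxy]) heven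
      rw [hEat, hi]

/-- A canonical assignment realizing an evaluation point. -/
noncomputable def asg (α : Model) (aa : α.D) (os : List α.D) : ℕ → α.D :=
  fun v => if h : v % 2 = 0 ∧ v / 2 < os.length then os.get ⟨v / 2, h.2⟩ else aa

theorem asg_one (α : Model) (aa : α.D) (os : List α.D) : asg α aa os 1 = aa := by
  simp [asg]

theorem asg_even (α : Model) (aa : α.D) (os : List α.D) (i : Fin os.length) :
    asg α aa os (2 * i.val) = os.get i := by
  have h2 : (2 * i.val) % 2 = 0 ∧ (2 * i.val) / 2 < os.length := ⟨by omega, by have := i.isLt; omega⟩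
  simp only [asg]
  rw [dif_pos h2]
  congr 1
  exact Fin.ext (by simp)

theorem sat_of_eval {α : Model} {a : α.D} {os : List α.D} {ψ : Fml}
    (hfo : FreeOK os.length ψ) (g : ℕ → α.D) (h1 : g 1 = a)
    (h2 : ∀ i : Fin os.length, g (2 * i.val) = os.get i) (he : ψ.eval α g) : Sat α a os ψ := by
  intro f hf1 hf2
  rw [eval_congr α ψ f g ?_]
  · exact he
  · intro v hv
    rcases hfo v hv with rfl | ⟨i, hi, rfl⟩
    · rw [hf1, h1]
    · rw [hf2 ⟨i, hi⟩, h2 ⟨i, hi⟩]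

theorem sat_iff_asg {α : Model} {a : α.D} {os : List α.D} {ψ : Fml}
    (hfo : FreeOK os.length ψ) :
    Sat α a os ψ ↔ ψ.eval α (asg α a os) :=
  ⟨fun h => h _ (asg_one α a os) (asg_even α a os),
   fun h => sat_of_eval hfo _ (asg_one α a os) (asg_even α a os) h⟩

theorem freeOK_ST (i : IFml) (n : ℕ) (h : ∀ v ∈ objFree i, ∃ j < n, v = 2 * j) :
    FreeOK n (ST i 1) := by
  intro v hv
  rw [ST_free i 1 rfl] at hv
  rcases Finset.mem_insert.mp hv with rfl | hv
  · exact Or.inl rfl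
  · exact Or.inr (h v hv)

theorem freeOK_ST' {i : IFml} {n : ℕ} (h : FreeOK n (ST i 1)) :
    ∀ v ∈ objFree i, ∃ j < n, v = 2 * j := by
  intro v hv
  have hv' : v ∈ (ST i 1).free := by
    rw [ST_free i 1 rfl]; exact Finset.mem_insert_of_mem hv
  rcases h v hv' with rfl | h'
  · exact absurd (objFree_even i 1 hv) (by norm_num)
  · exact h'

def iConj : List IFml → IFml
  | [] => .impl .fls .fls
  | i :: L => .conj i (iConj L)

def iDisj : List IFml → IFml
  | [] => .fls
  | i :: L => .disj i (iDisj L)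

theorem iConj_eval (α : Model) (L : List IFml) (x : ℕ) (f : ℕ → α.D) :
    (ST (iConj L) x).eval α f ↔ ∀ i ∈ L, (ST i x).eval α f := by
  induction L with
  | nil => simp [iConj, ST, Fml.eval]
  | cons i L ih =>
      simp only [iConj, ST, Fml.eval, List.mem_cons]
      rw [ih]
      constructor
      · rintro ⟨h1, h2⟩ j (rfl | hj); exacts [h1, h2 j hj]
      · intro h; exact ⟨h i (Or.inl rfl), fun j hj => h j (Or.inr hj)⟩

theorem iDisj_eval (α : Model) (L : List IFml) (x : ℕ) (f : ℕ → α.D) :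
    (ST (iDisj L) x).eval α f ↔ ∃ i ∈ L, (ST i x).eval α f := by
  induction L with
  | nil => simp [iDisj, ST, Fml.eval]
  | cons i L ih =>
      simp only [iDisj, ST, Fml.eval, List.mem_cons]
      rw [ih]
      constructor
      · rintro (h | ⟨j, hj, hh⟩); exacts [⟨i, Or.inl rfl, h⟩, ⟨j, Or.inr hj, hh⟩]
      · rintro ⟨j, rfl | hj, hh⟩; exacts [Or.inl hh, Or.inr ⟨j, hj, hh⟩]

theorem iConj_objFree (L : List IFml) : ∀ v ∈ objFree (iConj L), ∃ i ∈ L, v ∈ objFree i := by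
  induction L with
  | nil => intro v hv; simp [iConj, objFree] at hv
  | cons i L ih =>
      intro v hv
      rcases Finset.mem_union.mp hv with hv | hv
      · exact ⟨i, List.mem_cons_self, hv⟩
      · obtain ⟨j, hj, hh⟩ := ih v hv
        exact ⟨j, List.mem_cons_of_mem _ hj, hh⟩

theorem iDisj_objFree (L : List IFml) : ∀ v ∈ objFree (iDisj L), ∃ i ∈ L, v ∈ objFree i := by
  induction L with
  | nil => intro v hv; simp [iDisj, objFree] at hv
  | cons i L ih =>
      intro v hv
      rcases Finset.mem_union.mp hv with hv | hv
      · exact ⟨i, List.mem_cons_self, hv⟩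
      · obtain ⟨j, hj, hh⟩ := ih v hv
        exact ⟨j, List.mem_cons_of_mem _ hj, hh⟩

theorem iConj_syms (L : List IFml) (x : ℕ) :
    ∀ P ∈ (ST (iConj L) x).syms, P = Sym.R ∨ ∃ i ∈ L, P ∈ (ST i 1).syms := by
  induction L with
  | nil =>
      intro P hP
      left
      have : (ST (iConj []) x).syms = {Sym.R} ∪ (∅ ∪ ∅) := rfl
      rw [this] at hP
      simpa using hP
  | cons i L ih =>
      intro P hP
      have : (ST (iConj (i :: L)) x).syms = (ST i x).syms ∪ (ST (iConj L) x).syms := rfl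
      rw [this] at hP
      rcases Finset.mem_union.mp hP with h | h
      · right; exact ⟨i, List.mem_cons_self, by rwa [ST_syms i x] at h⟩
      · rcases ih P h with h' | ⟨j, hj, hh⟩
        exacts [Or.inl h', Or.inr ⟨j, List.mem_cons_of_mem _ hj, hh⟩]

theorem iDisj_syms (L : List IFml) (x : ℕ) :
    ∀ P ∈ (ST (iDisj L) x).syms, ∃ i ∈ L, P ∈ (ST i 1).syms := by
  induction L with
  | nil =>
      intro P hP
      have : (ST (iDisj []) x).syms = (∅ : Finset Sym) := rfl
      rw [this] at hP
      simp at hP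
  | cons i L ih =>
      intro P hP
      have : (ST (iDisj (i :: L)) x).syms = (ST i x).syms ∪ (ST (iDisj L) x).syms := rfl
      rw [this] at hP
      rcases Finset.mem_union.mp hP with h | h
      · exact ⟨i, List.mem_cons_self, by rwa [ST_syms i x] at h⟩
      · obtain ⟨j, hj, hh⟩ := ih P h
        exact ⟨j, List.mem_cons_of_mem _ hj, hh⟩

theorem exists_list_of_finset (Γ' : Finset Fml) (Q : Fml → Prop) (F : IFml → Fml)
    (P : IFml → Prop) (hQ : ∀ ψ, Q ψ → ∃ i, ψ = F i ∧ P i) :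
    ∃ L : List IFml, (∀ i ∈ L, P i) ∧ ∀ ψ ∈ Γ', Q ψ → ∃ i ∈ L, ψ = F i := by
  classical
  refine ⟨Γ'.toList.filterMap (fun ψ => if h : Q ψ then some (hQ ψ h).choose else none), ?_, ?_⟩
  · intro i hi
    simp only [List.mem_filterMap] at hi
    obtain ⟨ψ, hψ, hF⟩ := hi
    split at hF
    · rename_i h
      obtain rfl : (hQ ψ h).choose = i := Option.some.inj hF
      exact ((hQ ψ h).choose_spec).2
    · exact absurd hF (by simp)
  · intro ψ hψ hQψ
    refine ⟨(hQ ψ hQψ).choose, ?_, ((hQ ψ hQψ).choose_spec).1⟩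
    simp only [List.mem_filterMap]
    exact ⟨ψ, Finset.mem_toList.mpr hψ, by rw [dif_pos hQψ]⟩

theorem append_get {D : Type} (os : List D) (b : D) (i : Fin (os ++ [b]).length) :
    (os ++ [b]).get i = if h : i.val < os.length then os.get ⟨i.val, h⟩ else b := by
  rcases i with ⟨iv, hi⟩
  simp only [List.length_append, List.length_singleton] at hi
  by_cases h : iv < os.length
  · rw [dif_pos h]
    simp only [List.get_eq_getElem]
    exact List.getElem_append_left h
  · rw [dif_neg h]
    have hiv : iv = os.length := by omega
    subst hiv
    simp

theorem atoms_transfer (Θ : Set Sym) (α β : Model) (a' : α.D) (os : List α.D)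
    (c' : β.D) (os' : List β.D) (hl : os.length = os'.length)
    (h : ITLe Θ α a' os β c' os') (P : Sym) (hP : P ∈ Θ) (hPR : P ≠ Sym.R) (hPE : P ≠ Sym.E)
    (hat : atomSat α P a' os) : atomSat β P c' os' := by
  obtain ⟨harr, hrel⟩ := hat
  cases P with
  | R => exact absurd rfl hPR
  | E => exact absurd rfl hPE
  | P k m =>
    have hk : k = os.length := by
      have : k + 1 = os.length + 1 := harr
      omega
    subst hk
    set i : IFml := IFml.atom os.length m (fun idx => idx.val) with hidef
    have hsy : ↑(ST i 1).syms ⊆ Θ := by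
      intro P' hP'
      have he : (ST i 1).syms = {Sym.P os.length m} := rfl
      rw [he] at hP'
      simp only [Finset.coe_singleton, Set.mem_singleton_iff] at hP'
      subst hP'
      exact hP
    have hfo : FreeOK os.length (ST i 1) := by
      apply freeOK_ST
      intro v hv
      have he : objFree i = Finset.univ.image (fun idx : Fin os.length => 2 * idx.val) := rfl
      rw [he] at hv
      simp only [Finset.mem_image, Finset.mem_univ, true_and] at hv
      obtain ⟨idx, rfl⟩ := hv
      exact ⟨idx.val, idx.isLt, rfl⟩
    have hsat : Sat α a' os (ST i 1) := by
      intro f h1 h2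
      show α.rel (Sym.P os.length m)
        (fun j => f ((Fin.cons 1 (fun idx => 2 * idx.val) : Fin (os.length + 1) → ℕ) j))
      have hfn : (fun j : Fin (os.length + 1) =>
            f ((Fin.cons 1 (fun idx => 2 * idx.val) : Fin (os.length + 1) → ℕ) j)) =
          (fun j : Fin (os.length + 1) => (a' :: os).get (Fin.cast harr j)) := by
        funext j
        refine Fin.cases ?_ ?_ j
        · exact h1
        · intro idx
          exact h2 idx
      exact (iff_of_eq (congrArg (α.rel (Sym.P os.length m)) hfn)).mpr hrel
    have hsat' : Sat β c' os' (ST i 1) := h i hsy hfo hsat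
    have harr' : (Sym.P os.length m).arity = os'.length + 1 := by
      show os.length + 1 = os'.length + 1
      omega
    refine ⟨harr', ?_⟩
    have he := hsat' (asg β c' os') (asg_one β c' os') (asg_even β c' os')
    have hfn : (fun j : Fin (os.length + 1) =>
          asg β c' os' ((Fin.cons 1 (fun idx => 2 * idx.val) : Fin (os.length + 1) → ℕ) j)) =
        (fun j : Fin (os.length + 1) => (c' :: os').get (Fin.cast harr' j)) := by
      funext j
      refine Fin.cases ?_ ?_ j
      · show asg β c' os' 1 = _
        rw [asg_one]
        rfl
      · intro idx
        show asg β c' os' (2 * idx.val) = _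
        have hidx : idx.val < os'.length := by have := idx.isLt; omega
        exact asg_even β c' os' ⟨idx.val, hidx⟩
    exact (iff_of_eq (congrArg (β.rel (Sym.P os.length m)) hfn)).mp he

theorem exi_lemma (Θ : Set Sym) (hRΘ : Sym.R ∈ Θ) (hEΘ : Sym.E ∈ Θ) (α β : Model)
    (hβ : OmegaSaturated β) (a' : α.D) (os : List α.D) (c' : β.D) (os' : List β.D)
    (hl : os.length = os'.length) (h : ITLe Θ α a' os β c' os')
    (b'' : α.D) (hb : relE α a' b'') :
    ∃ d'', relE β c' d'' ∧ ITLe Θ α a' (os ++ [b'']) β c' (os' ++ [d'']) := by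
  classical
  set n := os.length with hn
  set Γ : Set Fml := insert (.atom .E ![1, 2 * n])
    {ψ | ∃ i : IFml, ψ = ST i 1 ∧ ↑(ST i 1).syms ⊆ Θ ∧ FreeOK (n + 1) (ST i 1) ∧
      Sat α a' (os ++ [b'']) (ST i 1)} with hΓdef
  set W : Finset ℕ := insert 1 ((Finset.range (n + 1)).image (fun j => 2 * j)) with hW
  have hmemT : ∀ v : ℕ, (v = 1 ∨ ∃ j < n + 1, v = 2 * j) →
      v ∈ (↑(({2 * n} : Finset ℕ) ∪ W) : Set ℕ) := by
    intro v hv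
    simp only [hW, Finset.coe_union, Finset.coe_insert, Finset.coe_singleton, Set.mem_union,
      Set.mem_insert_iff, Set.mem_singleton_iff, Finset.coe_image, Finset.coe_range,
      Set.mem_image, Set.mem_Iio]
    rcases hv with rfl | ⟨j, hj, rfl⟩
    · exact Or.inr (Or.inl rfl)
    · exact Or.inr (Or.inr ⟨j, hj, rfl⟩)
  have hfree : ∀ ψ ∈ Γ, ↑ψ.free ⊆ (↑(({2 * n} : Finset ℕ) ∪ W) : Set ℕ) := by
    intro ψ hψ
    rcases Set.mem_insert_iff.mp hψ with rfl | ⟨i, rfl, _, hfo, _⟩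
    · rw [freeE]
      intro v hv
      simp only [Finset.coe_insert, Finset.coe_singleton, Set.mem_insert_iff,
        Set.mem_singleton_iff] at hv
      rcases hv with rfl | rfl
      · exact hmemT 1 (Or.inl rfl)
      · exact hmemT (2 * n) (Or.inr ⟨n, by omega, rfl⟩)
    · intro v hv
      have hv2 : v ∈ insert 1 (objFree i) := by
        have he3 : (ST i 1).free = insert 1 (objFree i) := ST_free i 1 rfl
        rwa [he3] at hv
      rcases Finset.mem_insert.mp hv2 with rfl | hv2
      · exact hmemT 1 (Or.inl rfl)
      · exact hmemT v (Or.inr (freeOK_ST' hfo v hv2))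
  have hfin : ∀ Γ' : Finset Fml, ↑Γ' ⊆ Γ →
      ∃ g : ℕ → β.D, (∀ v ∉ ({2 * n} : Finset ℕ), g v = asg β c' os' v) ∧
        ∀ ψ ∈ Γ', ψ.eval β g := by
    intro Γ' hΓ'
    obtain ⟨L, hL1, hL2⟩ := exists_list_of_finset Γ'
      (fun ψ => ∃ i : IFml, ψ = ST i 1 ∧ ↑(ST i 1).syms ⊆ Θ ∧ FreeOK (n + 1) (ST i 1) ∧
        Sat α a' (os ++ [b'']) (ST i 1))
      (fun i => ST i 1)
      (fun i => ↑(ST i 1).syms ⊆ Θ ∧ FreeOK (n + 1) (ST i 1) ∧ Sat α a' (os ++ [b'']) (ST i 1))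
      (fun ψ hψ => by obtain ⟨i, h1, h2, h3, h4⟩ := hψ; exact ⟨i, h1, h2, h3, h4⟩)
    have hsyms : ↑(ST (IFml.ex n (iConj L)) 1).syms ⊆ Θ := by
      intro P hP
      have he : (ST (IFml.ex n (iConj L)) 1).syms = {Sym.E} ∪ (ST (iConj L) 1).syms := rfl
      rw [he] at hP
      simp only [Finset.coe_union, Set.mem_union, Finset.coe_singleton,
        Set.mem_singleton_iff, Finset.mem_coe] at hP
      rcases hP with rfl | hP
      · exact hEΘ
      · rcases iConj_syms L 1 P hP with rfl | ⟨i, hi, hPi⟩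
        · exact hRΘ
        · exact (hL1 i hi).1 hPi
    have hfok : FreeOK n (ST (IFml.ex n (iConj L)) 1) := by
      apply freeOK_ST
      intro v hv
      have he : objFree (IFml.ex n (iConj L)) = (objFree (iConj L)).erase (2 * n) := rfl
      rw [he] at hv
      obtain ⟨hne, hv⟩ := Finset.mem_erase.mp hv
      obtain ⟨i, hi, hvi⟩ := iConj_objFree L v hv
      obtain ⟨j, hj, rfl⟩ := freeOK_ST' (hL1 i hi).2.1 v hvi
      exact ⟨j, by omega, rfl⟩
    have hsatχ : Sat α a' os (ST (IFml.ex n (iConj L)) 1) := by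
      rw [sat_iff_asg hfok]
      show ∃ d, ((Fml.atom .E ![1, 2 * n]).eval α (Function.update (asg α a' os) (2 * n) d) ∧
        (ST (iConj L) 1).eval α (Function.update (asg α a' os) (2 * n) d))
      refine ⟨b'', ?_, ?_⟩
      · rw [evalE]
        rw [Function.update_of_ne (by omega : (1:ℕ) ≠ 2 * n), Function.update_self, asg_one]
        exact hb
      · rw [iConj_eval]
        intro i hi
        apply (hL1 i hi).2.2 _ ?_ ?_
        · rw [Function.update_of_ne (by omega : (1:ℕ) ≠ 2 * n), asg_one]
        · intro idx
          rw [append_get]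
          by_cases hidx : idx.val < os.length
          · rw [dif_pos hidx]
            rw [Function.update_of_ne (by omega : 2 * idx.val ≠ 2 * n)]
            exact asg_even α a' os ⟨idx.val, hidx⟩
          · rw [dif_neg hidx]
            have hix : idx.val = n := by
              have := idx.isLt
              simp only [List.length_append, List.length_singleton] at this
              omega
            rw [hix, Function.update_self]
    have hsatβ : Sat β c' os' (ST (IFml.ex n (iConj L)) 1) := h _ hsyms hfok hsatχ
    have he : ∃ d, ((Fml.atom .E ![1, 2 * n]).eval β (Function.update (asg β c' os') (2 * n) d) ∧
        (ST (iConj L) 1).eval β (Function.update (asg β c' os') (2 * n) d)) :=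
      hsatβ (asg β c' os') (asg_one β c' os') (asg_even β c' os')
    obtain ⟨d, hd1, hd2⟩ := he
    refine ⟨Function.update (asg β c' os') (2 * n) d, ?_, ?_⟩
    · intro v hv
      exact Function.update_of_ne (by simpa using hv) _ _
    · intro ψ hψ
      rcases Set.mem_insert_iff.mp (hΓ' hψ) with rfl | hQ
      · exact hd1
      · obtain ⟨i, hi, rfl⟩ := hL2 ψ hψ hQ
        rw [iConj_eval] at hd2
        exact hd2 i hi
  obtain ⟨g, hgoff, hg⟩ := hβ (asg β c' os') {2 * n} W Γ hfree hfin
  have hg1 : g 1 = c' := by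
    rw [hgoff 1 (by simp; omega), asg_one]
  have hgE := hg _ (Set.mem_insert _ _)
  rw [evalE, hg1] at hgE
  refine ⟨g (2 * n), hgE, ?_⟩
  intro i hsy hfo hsat
  have hfo' : FreeOK (n + 1) (ST i 1) := by
    have e1 : (os ++ [b'']).length = n + 1 := by simp [hn]
    rwa [e1] at hfo
  have hΓi : ST i 1 ∈ Γ := Set.mem_insert_of_mem _ ⟨i, rfl, hsy, hfo', hsat⟩
  have he := hg _ hΓi
  refine sat_of_eval ?_ g hg1 ?_ he
  · have e1 : (os' ++ [g (2 * n)]).length = n + 1 := by simp [hl]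
    rw [e1]
    exact hfo'
  · intro idx
    rw [append_get]
    by_cases hidx : idx.val < os'.length
    · rw [dif_pos hidx]
      have h2i : g (2 * idx.val) = asg β c' os' (2 * idx.val) :=
        hgoff _ (by simp; omega)
      rw [h2i]
      exact asg_even β c' os' ⟨idx.val, hidx⟩
    · rw [dif_neg hidx]
      have hix : idx.val = os'.length := by
        have := idx.isLt
        simp only [List.length_append, List.length_singleton] at this
        omega
      have e2 : 2 * idx.val = 2 * n := by omega
      rw [e2]

theorem uni_lemma (Θ : Set Sym) (hRΘ : Sym.R ∈ Θ) (hEΘ : Sym.E ∈ Θ) (α β : Model)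
    (hα : OmegaSaturated α) (a' : α.D) (os : List α.D) (c' : β.D) (os' : List β.D)
    (hl : os.length = os'.length) (h : ITLe Θ α a' os β c' os')
    (c'' d'' : β.D) (hc : relR β c' c'') (hd : relE β c'' d'') :
    ∃ a'' b'', relR α a' a'' ∧ relE α a'' b'' ∧
      ITLe Θ α a'' (os ++ [b'']) β c'' (os' ++ [d'']) := by
  classical
  set n := os.length with hn
  set Γ : Set Fml := insert (.atom .R ![1, 3]) (insert (.atom .E ![3, 2 * n])
    {ψ | ∃ i : IFml, ψ = (ST i 3).neg ∧ ↑(ST i 1).syms ⊆ Θ ∧ FreeOK (n + 1) (ST i 1) ∧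
      ¬ Sat β c'' (os' ++ [d'']) (ST i 1)}) with hΓdef
  set W : Finset ℕ := insert 1 ((Finset.range (n + 1)).image (fun j => 2 * j)) with hW
  have hmemT : ∀ v : ℕ, (v = 1 ∨ v = 3 ∨ ∃ j < n + 1, v = 2 * j) →
      v ∈ (↑(({3, 2 * n} : Finset ℕ) ∪ W) : Set ℕ) := by
    intro v hv
    simp only [hW, Finset.coe_union, Finset.coe_insert, Finset.coe_singleton, Set.mem_union,
      Set.mem_insert_iff, Set.mem_singleton_iff, Finset.coe_image, Finset.coe_range,
      Set.mem_image, Set.mem_Iio]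
    rcases hv with rfl | rfl | ⟨j, hj, rfl⟩
    · exact Or.inr (Or.inl rfl)
    · exact Or.inl (Or.inl rfl)
    · exact Or.inr (Or.inr ⟨j, hj, rfl⟩)
  have hfree : ∀ ψ ∈ Γ, ↑ψ.free ⊆ (↑(({3, 2 * n} : Finset ℕ) ∪ W) : Set ℕ) := by
    intro ψ hψ
    rcases Set.mem_insert_iff.mp hψ with rfl | hψ2
    · rw [freeR]
      intro v hv
      simp only [Finset.coe_insert, Finset.coe_singleton, Set.mem_insert_iff,
        Set.mem_singleton_iff] at hv
      rcases hv with rfl | rfl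
      · exact hmemT 1 (Or.inl rfl)
      · exact hmemT 3 (Or.inr (Or.inl rfl))
    rcases Set.mem_insert_iff.mp hψ2 with rfl | ⟨i, rfl, _, hfo, _⟩
    · rw [freeE]
      intro v hv
      simp only [Finset.coe_insert, Finset.coe_singleton, Set.mem_insert_iff,
        Set.mem_singleton_iff] at hv
      rcases hv with rfl | rfl
      · exact hmemT 3 (Or.inr (Or.inl rfl))
      · exact hmemT (2 * n) (Or.inr (Or.inr ⟨n, by omega, rfl⟩))
    · intro v hv
      have hv2 : v ∈ insert 3 (objFree i) := by
        have he3 : (ST i 3).neg.free = insert 3 (objFree i) := ST_free i 3 rfl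
        rwa [he3] at hv
      rcases Finset.mem_insert.mp hv2 with rfl | hv2
      · exact hmemT 3 (Or.inr (Or.inl rfl))
      · exact hmemT v (Or.inr (Or.inr (freeOK_ST' hfo v hv2)))
  have hfin : ∀ Γ' : Finset Fml, ↑Γ' ⊆ Γ →
      ∃ g : ℕ → α.D, (∀ v ∉ ({3, 2 * n} : Finset ℕ), g v = asg α a' os v) ∧
        ∀ ψ ∈ Γ', ψ.eval α g := by
    intro Γ' hΓ'
    obtain ⟨L, hL1, hL2⟩ := exists_list_of_finset Γ'
      (fun ψ => ∃ i : IFml, ψ = (ST i 3).neg ∧ ↑(ST i 1).syms ⊆ Θ ∧ FreeOK (n + 1) (ST i 1) ∧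
        ¬ Sat β c'' (os' ++ [d'']) (ST i 1))
      (fun i => (ST i 3).neg)
      (fun i => ↑(ST i 1).syms ⊆ Θ ∧ FreeOK (n + 1) (ST i 1) ∧
        ¬ Sat β c'' (os' ++ [d'']) (ST i 1))
      (fun ψ hψ => by obtain ⟨i, h1, h2, h3, h4⟩ := hψ; exact ⟨i, h1, h2, h3, h4⟩)
    have hsyms : ↑(ST (IFml.all n (iDisj L)) 1).syms ⊆ Θ := by
      intro P hP
      have he : (ST (IFml.all n (iDisj L)) 1).syms =
          ({Sym.R} ∪ {Sym.E}) ∪ (ST (iDisj L) 3).syms := rfl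
      rw [he] at hP
      simp only [Finset.coe_union, Set.mem_union, Finset.coe_singleton,
        Set.mem_singleton_iff, Finset.mem_coe] at hP
      rcases hP with (rfl | rfl) | hP
      · exact hRΘ
      · exact hEΘ
      · obtain ⟨i, hi, hPi⟩ := iDisj_syms L 3 P hP
        exact (hL1 i hi).1 hPi
    have hfok : FreeOK n (ST (IFml.all n (iDisj L)) 1) := by
      apply freeOK_ST
      intro v hv
      have he : objFree (IFml.all n (iDisj L)) = (objFree (iDisj L)).erase (2 * n) := rfl
      rw [he] at hv
      obtain ⟨hne, hv⟩ := Finset.mem_erase.mp hv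
      obtain ⟨i, hi, hvi⟩ := iDisj_objFree L v hv
      obtain ⟨j, hj, rfl⟩ := freeOK_ST' (hL1 i hi).2.1 v hvi
      exact ⟨j, by omega, rfl⟩
    have hnsat : ¬ Sat β c' os' (ST (IFml.all n (iDisj L)) 1) := by
      intro hs
      have he : ∀ d e : β.D, (((Fml.atom .R ![1, 3]).eval β
            (Function.update (Function.update (asg β c' os') 3 d) (2 * n) e)) ∧
          ((Fml.atom .E ![3, 2 * n]).eval β
            (Function.update (Function.update (asg β c' os') 3 d) (2 * n) e))) →
          (ST (iDisj L) 3).eval β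
            (Function.update (Function.update (asg β c' os') 3 d) (2 * n) e) :=
        hs (asg β c' os') (asg_one β c' os') (asg_even β c' os')
      have hf21 : Function.update (Function.update (asg β c' os') 3 c'') (2 * n) d'' 1 = c' := by
        rw [Function.update_of_ne (by omega : (1:ℕ) ≠ 2 * n),
          Function.update_of_ne (by omega : (1:ℕ) ≠ 3), asg_one]
      have hf23 : Function.update (Function.update (asg β c' os') 3 c'') (2 * n) d'' 3 = c'' := by
        rw [Function.update_of_ne (by omega : (3:ℕ) ≠ 2 * n), Function.update_self]
      have hf2n : Function.update (Function.update (asg β c' os') 3 c'') (2 * n) d'' (2 * n) = d'' :=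
        Function.update_self _ _ _
      have hdisj := he c'' d'' ⟨by rw [evalR, hf21, hf23]; exact hc,
        by rw [evalE, hf23, hf2n]; exact hd⟩
      rw [iDisj_eval] at hdisj
      obtain ⟨i, hi, hev⟩ := hdisj
      apply (hL1 i hi).2.2
      have hev1 : (ST i 1).eval β (Function.update
          (Function.update (Function.update (asg β c' os') 3 c'') (2 * n) d'') 1 c'') := by
        refine (ST_eval_congr β i 1 3 _ _ rfl rfl ?_ ?_).mpr hev
        · rw [Function.update_self, hf23]
        · intro v
          exact Function.update_of_ne (by omega) _ _
      refine sat_of_eval ?_ _ (Function.update_self _ _ _) ?_ hev1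
      · have e1 : (os' ++ [d'']).length = n + 1 := by simp [hl]
        rw [e1]
        exact (hL1 i hi).2.1
      · intro idx
        rw [append_get]
        have hne1 : 2 * idx.val ≠ 1 := by omega
        by_cases hidx : idx.val < os'.length
        · rw [dif_pos hidx]
          rw [Function.update_of_ne hne1,
            Function.update_of_ne (by omega : 2 * idx.val ≠ 2 * n),
            Function.update_of_ne (by omega : 2 * idx.val ≠ 3)]
          exact asg_even β c' os' ⟨idx.val, hidx⟩
        · rw [dif_neg hidx]
          have hix : idx.val = os'.length := by
            have := idx.isLt
            simp only [List.length_append, List.length_singleton] at this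
            omega
          have e2 : 2 * idx.val = 2 * n := by omega
          rw [Function.update_of_ne hne1, e2, hf2n]
    have hnsat' : ¬ Sat α a' os (ST (IFml.all n (iDisj L)) 1) := fun hs => hnsat (h _ hsyms hfok hs)
    rw [sat_iff_asg hfok] at hnsat'
    have hnsat'' : ¬ (∀ d e : α.D, (((Fml.atom .R ![1, 3]).eval α
          (Function.update (Function.update (asg α a' os) 3 d) (2 * n) e)) ∧
        ((Fml.atom .E ![3, 2 * n]).eval α
          (Function.update (Function.update (asg α a' os) 3 d) (2 * n) e))) →
        (ST (iDisj L) 3).eval α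
          (Function.update (Function.update (asg α a' os) 3 d) (2 * n) e)) := hnsat'
    push_neg at hnsat''
    obtain ⟨d, e, hconj, hnd⟩ := hnsat''
    refine ⟨Function.update (Function.update (asg α a' os) 3 d) (2 * n) e, ?_, ?_⟩
    · intro v hv
      simp only [Finset.mem_insert, Finset.mem_singleton, not_or] at hv
      rw [Function.update_of_ne hv.2, Function.update_of_ne hv.1]
    · intro ψ hψ
      rcases Set.mem_insert_iff.mp (hΓ' hψ) with rfl | hψ2
      · exact hconj.1
      rcases Set.mem_insert_iff.mp hψ2 with rfl | hQ
      · exact hconj.2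
      · obtain ⟨i, hi, rfl⟩ := hL2 ψ hψ hQ
        show ¬ (ST i 3).eval α _
        intro hcontra
        apply hnd
        rw [iDisj_eval]
        exact ⟨i, hi, hcontra⟩
  obtain ⟨g, hgoff, hg⟩ := hα (asg α a' os) {3, 2 * n} W Γ hfree hfin
  have hg1 : g 1 = a' := by
    rw [hgoff 1 (by simp; omega), asg_one]
  have hgR := hg _ (Set.mem_insert _ _)
  rw [evalR, hg1] at hgR
  have hgE := hg _ (Set.mem_insert_of_mem _ (Set.mem_insert _ _))
  rw [evalE] at hgE
  refine ⟨g 3, g (2 * n), hgR, hgE, ?_⟩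
  intro i hsy hfo hsat
  by_contra hns
  have hfo' : FreeOK (n + 1) (ST i 1) := by
    have e1 : (os ++ [g (2 * n)]).length = n + 1 := by simp [hn]
    rwa [e1] at hfo
  have hΓi : (ST i 3).neg ∈ Γ :=
    Set.mem_insert_of_mem _ (Set.mem_insert_of_mem _ ⟨i, rfl, hsy, hfo', hns⟩)
  have hneg : ¬ (ST i 3).eval α g := hg _ hΓi
  apply hneg
  have hev : (ST i 1).eval α (Function.update g 1 (g 3)) := by
    apply hsat
    · exact Function.update_self _ _ _
    · intro idx
      rw [append_get]
      have hne1 : 2 * idx.val ≠ 1 := by omega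
      by_cases hidx : idx.val < os.length
      · rw [dif_pos hidx]
        rw [Function.update_of_ne hne1, hgoff _ (by simp; omega)]
        exact asg_even α a' os ⟨idx.val, hidx⟩
      · rw [dif_neg hidx]
        have hix : idx.val = os.length := by
          have := idx.isLt
          simp only [List.length_append, List.length_singleton] at this
          omega
        have e2 : 2 * idx.val = 2 * n := by omega
        rw [Function.update_of_ne hne1, e2]
  refine (ST_eval_congr α i 1 3 (Function.update g 1 (g 3)) g rfl rfl ?_ ?_).mp hev
  · exact Function.update_self _ _ _
  · intro v
    exact Function.update_of_ne (by omega) _ _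

theorem back_lemma (Θ : Set Sym) (hRΘ : Sym.R ∈ Θ) (hEΘ : Sym.E ∈ Θ) (α β : Model)
    (hα : OmegaSaturated α) (a' : α.D) (os : List α.D) (c' : β.D) (os' : List β.D)
    (hl : os.length = os'.length) (h : ITLe Θ α a' os β c' os')
    (c'' : β.D) (hc : relR β c' c'') :
    ∃ a'', relR α a' a'' ∧ ITLe Θ β c'' os' α a'' os ∧ ITLe Θ α a'' os β c'' os' := by
  classical
  set n := os.length with hn
  set Γ : Set Fml := insert (.atom .R ![1, 3])
    ({ψ | ∃ i : IFml, ψ = ST i 3 ∧ ↑(ST i 1).syms ⊆ Θ ∧ FreeOK n (ST i 1) ∧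
        Sat β c'' os' (ST i 1)} ∪
     {ψ | ∃ i : IFml, ψ = (ST i 3).neg ∧ ↑(ST i 1).syms ⊆ Θ ∧ FreeOK n (ST i 1) ∧
        ¬ Sat β c'' os' (ST i 1)}) with hΓdef
  set W : Finset ℕ := insert 1 ((Finset.range n).image (fun j => 2 * j)) with hW
  have hmemT : ∀ v : ℕ, (v = 1 ∨ v = 3 ∨ ∃ j < n, v = 2 * j) →
      v ∈ (↑(({3} : Finset ℕ) ∪ W) : Set ℕ) := by
    intro v hv
    simp only [hW, Finset.coe_union, Finset.coe_insert, Finset.coe_singleton, Set.mem_union,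
      Set.mem_insert_iff, Set.mem_singleton_iff, Finset.coe_image, Finset.coe_range,
      Set.mem_image, Set.mem_Iio]
    rcases hv with rfl | rfl | ⟨j, hj, rfl⟩
    · exact Or.inr (Or.inl rfl)
    · exact Or.inl rfl
    · exact Or.inr (Or.inr ⟨j, hj, rfl⟩)
  have hfree : ∀ ψ ∈ Γ, ↑ψ.free ⊆ (↑(({3} : Finset ℕ) ∪ W) : Set ℕ) := by
    intro ψ hψ
    rcases Set.mem_insert_iff.mp hψ with rfl | hψ2
    · rw [freeR]
      intro v hv
      simp only [Finset.coe_insert, Finset.coe_singleton, Set.mem_insert_iff,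
        Set.mem_singleton_iff] at hv
      rcases hv with rfl | rfl
      · exact hmemT 1 (Or.inl rfl)
      · exact hmemT 3 (Or.inr (Or.inl rfl))
    rcases hψ2 with ⟨i, rfl, _, hfo, _⟩ | ⟨i, rfl, _, hfo, _⟩
    · intro v hv
      have hv2 : v ∈ insert 3 (objFree i) := by
        have he3 : (ST i 3).free = insert 3 (objFree i) := ST_free i 3 rfl
        rwa [he3] at hv
      rcases Finset.mem_insert.mp hv2 with rfl | hv2
      · exact hmemT 3 (Or.inr (Or.inl rfl))
      · exact hmemT v (Or.inr (Or.inr (freeOK_ST' hfo v hv2)))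
    · intro v hv
      have hv2 : v ∈ insert 3 (objFree i) := by
        have he3 : (ST i 3).neg.free = insert 3 (objFree i) := ST_free i 3 rfl
        rwa [he3] at hv
      rcases Finset.mem_insert.mp hv2 with rfl | hv2
      · exact hmemT 3 (Or.inr (Or.inl rfl))
      · exact hmemT v (Or.inr (Or.inr (freeOK_ST' hfo v hv2)))
  have hfin : ∀ Γ' : Finset Fml, ↑Γ' ⊆ Γ →
      ∃ g : ℕ → α.D, (∀ v ∉ ({3} : Finset ℕ), g v = asg α a' os v) ∧
        ∀ ψ ∈ Γ', ψ.eval α g := by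
    intro Γ' hΓ'
    obtain ⟨L1, hL11, hL12⟩ := exists_list_of_finset Γ'
      (fun ψ => ∃ i : IFml, ψ = ST i 3 ∧ ↑(ST i 1).syms ⊆ Θ ∧ FreeOK n (ST i 1) ∧
        Sat β c'' os' (ST i 1))
      (fun i => ST i 3)
      (fun i => ↑(ST i 1).syms ⊆ Θ ∧ FreeOK n (ST i 1) ∧ Sat β c'' os' (ST i 1))
      (fun ψ hψ => by obtain ⟨i, h1, h2, h3, h4⟩ := hψ; exact ⟨i, h1, h2, h3, h4⟩)
    obtain ⟨L2, hL21, hL22⟩ := exists_list_of_finset Γ'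
      (fun ψ => ∃ i : IFml, ψ = (ST i 3).neg ∧ ↑(ST i 1).syms ⊆ Θ ∧ FreeOK n (ST i 1) ∧
        ¬ Sat β c'' os' (ST i 1))
      (fun i => (ST i 3).neg)
      (fun i => ↑(ST i 1).syms ⊆ Θ ∧ FreeOK n (ST i 1) ∧ ¬ Sat β c'' os' (ST i 1))
      (fun ψ hψ => by obtain ⟨i, h1, h2, h3, h4⟩ := hψ; exact ⟨i, h1, h2, h3, h4⟩)
    have hsyms : ↑(ST (IFml.impl (iConj L1) (iDisj L2)) 1).syms ⊆ Θ := by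
      intro P hP
      have he : (ST (IFml.impl (iConj L1) (iDisj L2)) 1).syms =
          {Sym.R} ∪ ((ST (iConj L1) 3).syms ∪ (ST (iDisj L2) 3).syms) := rfl
      rw [he] at hP
      simp only [Finset.coe_union, Set.mem_union, Finset.coe_singleton,
        Set.mem_singleton_iff, Finset.mem_coe] at hP
      rcases hP with rfl | hP | hP
      · exact hRΘ
      · rcases iConj_syms L1 3 P hP with rfl | ⟨i, hi, hPi⟩
        · exact hRΘ
        · exact (hL11 i hi).1 hPi
      · obtain ⟨i, hi, hPi⟩ := iDisj_syms L2 3 P hP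
        exact (hL21 i hi).1 hPi
    have hfok : FreeOK n (ST (IFml.impl (iConj L1) (iDisj L2)) 1) := by
      apply freeOK_ST
      intro v hv
      have he : objFree (IFml.impl (iConj L1) (iDisj L2)) =
          objFree (iConj L1) ∪ objFree (iDisj L2) := rfl
      rw [he] at hv
      rcases Finset.mem_union.mp hv with hv | hv
      · obtain ⟨i, hi, hvi⟩ := iConj_objFree L1 v hv
        exact freeOK_ST' (hL11 i hi).2.1 v hvi
      · obtain ⟨i, hi, hvi⟩ := iDisj_objFree L2 v hv
        exact freeOK_ST' (hL21 i hi).2.1 v hvi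
    have hnsat : ¬ Sat β c' os' (ST (IFml.impl (iConj L1) (iDisj L2)) 1) := by
      intro hs
      have he : ∀ d : β.D, ((Fml.atom .R ![1, 3]).eval β (Function.update (asg β c' os') 3 d)) →
          (ST (iConj L1) 3).eval β (Function.update (asg β c' os') 3 d) →
          (ST (iDisj L2) 3).eval β (Function.update (asg β c' os') 3 d) :=
        hs (asg β c' os') (asg_one β c' os') (asg_even β c' os')
      have hf11 : Function.update (asg β c' os') 3 c'' 1 = c' := by
        rw [Function.update_of_ne (by omega : (1:ℕ) ≠ 3), asg_one]
      have hf13 : Function.update (asg β c' os') 3 c'' 3 = c'' := Function.update_self _ _ _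
      have hvalid : ∀ idx : Fin os'.length,
          Function.update (Function.update (asg β c' os') 3 c'') 1 c'' (2 * idx.val) =
            os'.get idx := by
        intro idx
        rw [Function.update_of_ne (by omega : 2 * idx.val ≠ 1),
          Function.update_of_ne (by omega : 2 * idx.val ≠ 3)]
        exact asg_even β c' os' idx
      have hecongr : ∀ i : IFml,
          ((ST i 1).eval β (Function.update (Function.update (asg β c' os') 3 c'') 1 c'') ↔
          (ST i 3).eval β (Function.update (asg β c' os') 3 c'')) := by
        intro i
        refine ST_eval_congr β i 1 3 _ _ rfl rfl ?_ ?_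
        · rw [Function.update_self, hf13]
        · intro v
          exact Function.update_of_ne (by omega) _ _
      have hdisj := he c'' (by rw [evalR, hf11, hf13]; exact hc) ?_
      · rw [iDisj_eval] at hdisj
        obtain ⟨i, hi, hev⟩ := hdisj
        apply (hL21 i hi).2.2
        have hev1 := (hecongr i).mpr hev
        refine sat_of_eval ?_ _ (Function.update_self _ _ _) hvalid hev1
        have e1 : os'.length = n := hl.symm
        rw [e1]
        exact (hL21 i hi).2.1
      · rw [iConj_eval]
        intro i hi
        refine (hecongr i).mp ?_
        exact (hL11 i hi).2.2 _ (Function.update_self _ _ _) hvalid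
    have hnsat' : ¬ Sat α a' os (ST (IFml.impl (iConj L1) (iDisj L2)) 1) :=
      fun hs => hnsat (h _ hsyms hfok hs)
    rw [sat_iff_asg hfok] at hnsat'
    have hnsat'' : ¬ (∀ d : α.D,
        ((Fml.atom .R ![1, 3]).eval α (Function.update (asg α a' os) 3 d)) →
        (ST (iConj L1) 3).eval α (Function.update (asg α a' os) 3 d) →
        (ST (iDisj L2) 3).eval α (Function.update (asg α a' os) 3 d)) := hnsat'
    push_neg at hnsat''
    obtain ⟨d, hRd, hCd, hnDd⟩ := hnsat''
    refine ⟨Function.update (asg α a' os) 3 d, ?_, ?_⟩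
    · intro v hv
      simp only [Finset.mem_singleton] at hv
      rw [Function.update_of_ne hv]
    · intro ψ hψ
      rcases Set.mem_insert_iff.mp (hΓ' hψ) with rfl | hψ2
      · exact hRd
      rcases hψ2 with hQ | hQ
      · obtain ⟨i, hi, rfl⟩ := hL12 ψ hψ hQ
        rw [iConj_eval] at hCd
        exact hCd i hi
      · obtain ⟨i, hi, rfl⟩ := hL22 ψ hψ hQ
        show ¬ (ST i 3).eval α _
        intro hcontra
        apply hnDd
        rw [iDisj_eval]
        exact ⟨i, hi, hcontra⟩
  obtain ⟨g, hgoff, hg⟩ := hα (asg α a' os) {3} W Γ hfree hfin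
  have hg1 : g 1 = a' := by
    rw [hgoff 1 (by simp), asg_one]
  have hgR := hg _ (Set.mem_insert _ _)
  rw [evalR, hg1] at hgR
  have hvalidg : ∀ idx : Fin os.length, Function.update g 1 (g 3) (2 * idx.val) = os.get idx := by
    intro idx
    rw [Function.update_of_ne (by omega : 2 * idx.val ≠ 1), hgoff _ (by simp; omega)]
    exact asg_even α a' os idx
  have hgcongr : ∀ i : IFml, ((ST i 1).eval α (Function.update g 1 (g 3)) ↔
      (ST i 3).eval α g) := by
    intro i
    refine ST_eval_congr α i 1 3 (Function.update g 1 (g 3)) g rfl rfl ?_ ?_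
    · exact Function.update_self _ _ _
    · intro v
      exact Function.update_of_ne (by omega) _ _
  refine ⟨g 3, hgR, ?_, ?_⟩
  · intro i hsy hfo hsat
    have hfo' : FreeOK n (ST i 1) := by rwa [hl.symm] at hfo
    have hΓi : ST i 3 ∈ Γ :=
      Set.mem_insert_of_mem _ (Or.inl ⟨i, rfl, hsy, hfo', hsat⟩)
    have hev : (ST i 3).eval α g := hg _ hΓi
    refine sat_of_eval ?_ (Function.update g 1 (g 3)) (Function.update_self _ _ _)
      hvalidg ((hgcongr i).mpr hev)
    exact hfo'
  · intro i hsy hfo hsat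
    by_contra hns
    have hΓi : (ST i 3).neg ∈ Γ :=
      Set.mem_insert_of_mem _ (Or.inr ⟨i, rfl, hsy, hfo, hns⟩)
    have hneg : ¬ (ST i 3).eval α g := hg _ hΓi
    apply hneg
    refine (hgcongr i).mp ?_
    exact hsat (Function.update g 1 (g 3)) (Function.update_self _ _ _) hvalidg

/-- between ω-saturated models, inclusion of intuitionistic theories
of the points yields an asimulation. -/
theorem ITLe_is_asim_of_omegaSaturated (Θ : Set Sym)
    (hR : Sym.R ∈ Θ) (hE : Sym.E ∈ Θ)
    (M N : Model) (hM : OmegaSaturated M) (hN : OmegaSaturated N)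
    (a : M.D) (bs : List M.D) (c : N.D) (ds : List N.D)
    (hlen : bs.length = ds.length)
    (hle : ITLe Θ M a bs N c ds) :
    IsAsim Θ M N (fun s t a' os c' os' =>
      os.length = os'.length ∧ ITLe Θ (side M N s) a' os (side M N t) c' os') ∧
    (bs.length = ds.length ∧ ITLe Θ M a bs N c ds) := by
  have hsat : ∀ b : Bool, OmegaSaturated (side M N b) := by
    intro b
    cases b
    · exact hN
    · exact hM
  refine ⟨?_, hlen, hle⟩
  constructor
  · intro s t a' os c' os' hA
    exact hA.1
  · intro s t a' os c' os' hA P hP hPR hPE hat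
    exact atoms_transfer Θ _ _ _ _ _ _ hA.1 hA.2 P hP hPR hPE hat
  · intro s t a' os c' os' hA c'' hc
    obtain ⟨a'', h1, h2, h3⟩ := back_lemma Θ hR hE (side M N s) (side M N t) (hsat s)
      a' os c' os' hA.1 hA.2 c'' hc
    exact ⟨a'', h1, ⟨hA.1.symm, h2⟩, ⟨hA.1, h3⟩⟩
  · intro s t a' os c' os' hA b'' hb
    obtain ⟨d'', h1, h2⟩ := exi_lemma Θ hR hE (side M N s) (side M N t) (hsat t)
      a' os c' os' hA.1 hA.2 b'' hb
    exact ⟨d'', h1, by simp [hA.1], h2⟩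
  · intro s t a' os c' os' hA c'' d'' hc hd
    obtain ⟨a'', b'', h1, h2, h3⟩ := uni_lemma Θ hR hE (side M N s) (side M N t) (hsat s)
      a' os c' os' hA.1 hA.2 c'' d'' hc hd
    exact ⟨a'', b'', h1, h2, by simp [hA.1], h3⟩
end IPC
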